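/- Let b₁,…,b_d span a finite-dimensional real vector space V with the quasi-symmetry property (∑_{bᵢ∈ℓ} bᵢ = 0 for every line ℓ through 0), let Δ = ∑ᵢ [-1/2,0]bᵢ, let λ ∈ V* be such that ⟨λ,·⟩ = c is a supporting hyperplane of Δ defining a facet F, and set J = {i : ⟨λ, bᵢ⟩ > 0}. If χ = ρ₀ - (1/2)∑_{i∈J'} bᵢ' has a representation χ = ρ₀ - (1/2)∑_{i∈J} bᵢ + ∑_{i∈J''} βᵢ bᵢ with βᵢ ∈ (-1/2, 0), J'' ∩ J = ∅, then χ lies in the relative interior of the facet ρ₀ + F translated to ρ₀ and satisfies ⟨λ, χ - ρ₀⟩ = -(1/2)∑_{i∈J} ⟨λ, bᵢ⟩. -/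

import Mathlib

/-- The zonotope `∑ᵢ [-1/2,0]·bᵢ`. -/
def zono {V : Type*} [AddCommGroup V] [Module ℝ V] {d : ℕ} (b : Fin d → V) : Set V :=
  {x : V | ∃ β : Fin d → ℝ, (∀ i, β i ∈ Set.Icc (-(1/2) : ℝ) 0) ∧ x = ∑ i, β i • b i}

/-- A point of the sub-zonotope over `s` with all coefficients strictly inside
`(-1/2,0)` lies in the intrinsic interior of that sub-zonotope. -/
lemma subzono_mem_intrinsicInterior
    {V : Type*} [NormedAddCommGroup V] [NormedSpace ℝ V] [FiniteDimensional ℝ V]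
    {d : ℕ} (b : Fin d → V) (s : Finset (Fin d)) (β : Fin d → ℝ)
    (hβ : ∀ i ∈ s, β i ∈ Set.Ioo (-(1/2) : ℝ) 0) :
    (∑ i ∈ s, β i • b i) ∈ intrinsicInterior ℝ
      {x : V | ∃ γ : Fin d → ℝ, (∀ i ∈ s, γ i ∈ Set.Icc (-(1/2) : ℝ) 0) ∧
        x = ∑ i ∈ s, γ i • b i} := by
  classical
  set T : Set V := {x : V | ∃ γ : Fin d → ℝ, (∀ i ∈ s, γ i ∈ Set.Icc (-(1/2) : ℝ) 0) ∧
        x = ∑ i ∈ s, γ i • b i} with hTdef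
  set W : Submodule ℝ V := Submodule.span ℝ (b '' ↑s) with hW
  have hbW : ∀ i ∈ s, b i ∈ W := fun i hi => Submodule.subset_span ⟨i, hi, rfl⟩
  have hsumW : ∀ γ : Fin d → ℝ, (∑ i ∈ s, γ i • b i) ∈ W := fun γ =>
    Submodule.sum_mem _ fun i hi => Submodule.smul_mem _ _ (hbW i hi)
  have hTW : T ⊆ (W : Set V) := by
    rintro x ⟨γ, -, rfl⟩; exact hsumW γ
  -- the linear parametrization of `W`
  let Llin : (Fin d → ℝ) →ₗ[ℝ] W :=
    { toFun := fun γ => ⟨∑ i ∈ s, γ i • b i, hsumW γ⟩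
      map_add' := by
        intro x y; ext
        simp [add_smul, Finset.sum_add_distrib]
      map_smul' := by
        intro r x; ext
        simp [Finset.smul_sum, smul_smul] }
  let L : (Fin d → ℝ) →L[ℝ] W := Llin.toContinuousLinearMap
  have hsurj : Function.Surjective L := by
    intro w
    have hle : Submodule.span ℝ (b '' ↑s) ≤ LinearMap.range (W.subtype.comp Llin) := by
      rw [Submodule.span_le]
      rintro x ⟨i, hi, rfl⟩
      refine ⟨Pi.single i 1, ?_⟩
      simp only [LinearMap.comp_apply, Submodule.coe_subtype, Llin, LinearMap.coe_mk,
        AddHom.coe_mk]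
      rw [Finset.sum_eq_single i (fun j _ hj => by
        rw [Pi.single_eq_of_ne hj, zero_smul]) (fun h => absurd hi h)]
      simp
    obtain ⟨γ, hγ⟩ := hle w.2
    exact ⟨γ, Subtype.ext hγ⟩
  have hopen : IsOpenMap L := L.isOpenMap hsurj
  set O : Set (Fin d → ℝ) := (↑s : Set (Fin d)).pi (fun _ => Set.Ioo (-(1/2) : ℝ) 0) with hO
  have hOopen : IsOpen O := isOpen_set_pi s.finite_toSet (fun _ _ => isOpen_Ioo)
  have hβO : β ∈ O := fun i hi => hβ i hi
  have himg : IsOpen (L '' O) := hopen O hOopen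
  have hLβ : L β ∈ L '' O := ⟨β, hβO, rfl⟩
  obtain ⟨ε, hε, hball⟩ := Metric.isOpen_iff.1 himg _ hLβ
  set xs : V := ∑ i ∈ s, β i • b i with hxs
  have hxsT : xs ∈ T := ⟨β, fun i hi => ⟨(hβ i hi).1.le, (hβ i hi).2.le⟩, rfl⟩
  have haff : xs ∈ affineSpan ℝ T := subset_affineSpan ℝ T hxsT
  have haffW : (affineSpan ℝ T : Set V) ⊆ (W : Set V) := by
    intro y hy
    have h1 : affineSpan ℝ T ≤ (Submodule.span ℝ T).toAffineSubspace :=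
      affineSpan_le_toAffineSubspace_span
    have h2 : Submodule.span ℝ T ≤ W := Submodule.span_le.2 hTW
    exact h2 (h1 hy)
  rw [mem_intrinsicInterior]
  refine ⟨⟨xs, haff⟩, ?_, rfl⟩
  rw [mem_interior]
  refine ⟨Subtype.val ⁻¹' Metric.ball xs ε, ?_,
    (Metric.isOpen_ball).preimage continuous_subtype_val, by simpa using hε⟩
  rintro ⟨y, hy⟩ hyb
  simp only [Set.mem_preimage, Metric.mem_ball] at hyb ⊢
  have hyW : y ∈ W := haffW hy
  have hdist : dist (⟨y, hyW⟩ : W) (L β) < ε := by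
    have : ((L β : W) : V) = xs := rfl
    rw [Subtype.dist_eq, this]
    exact hyb
  obtain ⟨γ, hγO, hγ⟩ := hball hdist
  have hyeq : y = ∑ i ∈ s, γ i • b i := by
    have := congrArg (Subtype.val) hγ
    exact this.symm
  exact ⟨γ, fun i hi => ⟨(hγO i hi).1.le, (hγO i hi).2.le⟩, hyeq⟩

open scoped Classical in
/-- Let `Δ = ∑ᵢ [-1/2,0]bᵢ` be the zonotope of a quasi-symmetric spanning collection,
`λ` a functional supporting `Δ` (with `⟨λ,·⟩ ≥ c` on `Δ`, equality attained) defining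
the facet `F = {x ∈ Δ | ⟨λ,x⟩ = c}`, `J = {i : ⟨λ,bᵢ⟩ > 0}` and
`Jz = {i : ⟨λ,bᵢ⟩ = 0}`. If `χ = ρ₀ - (1/2)∑_{i∈J} bᵢ + ∑_{i∈Jz} βᵢ bᵢ` with
`βᵢ ∈ (-1/2,0)`, then `χ` lies in `ρ₀ +` the relative interior of `F` and
`⟨λ, χ - ρ₀⟩ = -(1/2)∑_{i∈J} ⟨λ, bᵢ⟩`. -/
theorem stmt19 {V : Type*} [NormedAddCommGroup V] [NormedSpace ℝ V]
    [FiniteDimensional ℝ V] {d : ℕ} (b : Fin d → V)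
    (hspan : Submodule.span ℝ (Set.range b) = ⊤)
    (hqs : ∀ ℓ : Submodule ℝ V, Module.finrank ℝ ↥ℓ = 1 →
      (∑ i : Fin d, if b i ∈ ℓ then b i else 0) = 0)
    (l : V →ₗ[ℝ] ℝ) (c : ℝ)
    (hsupp : ∀ x ∈ zono b, c ≤ l x) (hne : ∃ x ∈ zono b, l x = c)
    (J Jz : Finset (Fin d))
    (hJ : ∀ i, i ∈ J ↔ 0 < l (b i))
    (hJz : ∀ i, i ∈ Jz ↔ l (b i) = 0)
    (β : Fin d → ℝ) (hβ : ∀ i ∈ Jz, β i ∈ Set.Ioo (-(1/2) : ℝ) 0)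
    (ρ₀ χ : V)
    (hχ : χ = ρ₀ - (1/2 : ℝ) • ∑ i ∈ J, b i + ∑ i ∈ Jz, β i • b i) :
    χ - ρ₀ ∈ intrinsicInterior ℝ {x ∈ zono b | l x = c} ∧
    l (χ - ρ₀) = -(1/2) * ∑ i ∈ J, l (b i) := by
  classical
  have hzero : ∀ i ∈ Jz, l (b i) = 0 := fun i hi => (hJz i).1 hi
  have hpos : ∀ i ∈ J, 0 < l (b i) := fun i hi => (hJ i).1 hi
  have hnonpos : ∀ i, i ∉ J → l (b i) ≤ 0 := fun i hi =>
    not_lt.1 (fun h => hi ((hJ i).2 h))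
  set m : ℝ := -(1/2) * ∑ i ∈ J, l (b i) with hm
  have hl : ∀ γ : Fin d → ℝ, l (∑ i, γ i • b i) = ∑ i, γ i * l (b i) := by
    intro γ; rw [map_sum]; exact Finset.sum_congr rfl fun i _ => by rw [map_smul, smul_eq_mul]
  have key : ∀ γ : Fin d → ℝ, (∀ i, γ i ∈ Set.Icc (-(1/2) : ℝ) 0) →
      ∀ i, 0 ≤ γ i * l (b i) - (if i ∈ J then -(1/2) * l (b i) else 0) := by
    intro γ hγ i
    by_cases hi : i ∈ J
    · simp only [hi, if_pos]
      nlinarith [(hγ i).1, (hpos i hi).le]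
    · simp only [hi, if_neg, sub_zero, not_false_iff]
      nlinarith [(hγ i).2, hnonpos i hi]
  have hsum_if : ∀ f : Fin d → ℝ, (∑ i : Fin d, if i ∈ J then f i else 0) = ∑ i ∈ J, f i := by
    intro f; rw [Finset.sum_ite_mem, Finset.univ_inter]
  have hmif : m = ∑ i : Fin d, (if i ∈ J then -(1/2) * l (b i) else 0) := by
    rw [hsum_if, hm, Finset.mul_sum]
  have hlow : ∀ γ : Fin d → ℝ, (∀ i, γ i ∈ Set.Icc (-(1/2) : ℝ) 0) →
      m ≤ ∑ i, γ i * l (b i) := by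
    intro γ hγ
    rw [hmif]
    exact Finset.sum_le_sum fun i _ => by linarith [key γ hγ i]
  have hcm : c = m := by
    have hup : c ≤ m := by
      have hx₀ : (∑ i : Fin d, (if i ∈ J then (-(1/2) : ℝ) else 0) • b i) ∈ zono b :=
        ⟨_, fun i => by by_cases h : i ∈ J <;> simp [h] <;> norm_num, rfl⟩
      have h := hsupp _ hx₀
      rw [hl] at h
      refine h.trans (le_of_eq ?_)
      rw [hmif]
      exact Finset.sum_congr rfl fun i _ => by by_cases h : i ∈ J <;> simp [h]
    have hdn : m ≤ c := by
      obtain ⟨x, ⟨γ, hγ, rfl⟩, hxc⟩ := hne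
      rw [hl] at hxc
      rw [← hxc]
      exact hlow γ hγ
    linarith
  have hforce : ∀ γ : Fin d → ℝ, (∀ i, γ i ∈ Set.Icc (-(1/2) : ℝ) 0) →
      (∑ i, γ i * l (b i)) = m →
      (∀ i ∈ J, γ i = -(1/2)) ∧ (∀ i, i ∉ J → i ∉ Jz → γ i = 0) := by
    intro γ hγ heq
    have hz : ∀ i ∈ Finset.univ,
        γ i * l (b i) - (if i ∈ J then -(1/2) * l (b i) else 0) = 0 := by
      rw [← Finset.sum_eq_zero_iff_of_nonneg (fun i _ => key γ hγ i)]
      rw [Finset.sum_sub_distrib, heq, ← hmif, sub_self]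
    constructor
    · intro i hi
      have h := hz i (Finset.mem_univ i)
      rw [if_pos hi] at h
      have hL : l (b i) ≠ 0 := (hpos i hi).ne'
      have : (γ i + 1/2) * l (b i) = 0 := by linarith
      rcases mul_eq_zero.1 this with h' | h'
      · linarith
      · exact absurd h' hL
    · intro i hiJ hiz
      have h := hz i (Finset.mem_univ i)
      rw [if_neg hiJ, sub_zero] at h
      have hL : l (b i) ≠ 0 := fun h0 => hiz ((hJz i).2 h0)
      rcases mul_eq_zero.1 h with h' | h'
      · exact h'
      · exact absurd h' hL
  set v₀ : V := ∑ i ∈ J, (-(1/2) : ℝ) • b i with hv₀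
  set T : Set V := {x : V | ∃ γ : Fin d → ℝ, (∀ i ∈ Jz, γ i ∈ Set.Icc (-(1/2) : ℝ) 0) ∧
        x = ∑ i ∈ Jz, γ i • b i} with hTdef
  have hJJz : Disjoint J Jz := by
    rw [Finset.disjoint_left]
    intro i hi hiz
    exact (hpos i hi).ne' (hzero i hiz)
  have hsplit : ∀ γ : Fin d → ℝ, (∀ i ∈ J, γ i = -(1/2)) →
      (∀ i, i ∉ J → i ∉ Jz → γ i = 0) →
      ∑ i, γ i • b i = v₀ + ∑ i ∈ Jz, γ i • b i := by
    intro γ h1 h2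
    rw [← Finset.sum_subset (Finset.subset_univ (J ∪ Jz)) (fun i _ hi => by
      rw [Finset.mem_union] at hi
      push_neg at hi
      rw [h2 i hi.1 hi.2, zero_smul])]
    rw [Finset.sum_union hJJz]
    congr 1
    exact Finset.sum_congr rfl fun i hi => by rw [h1 i hi]
  have hlv₀ : l v₀ = m := by
    rw [hv₀, map_sum, hm, Finset.mul_sum]
    exact Finset.sum_congr rfl fun i _ => by rw [map_smul, smul_eq_mul]
  have hlT : ∀ γ : Fin d → ℝ, l (∑ i ∈ Jz, γ i • b i) = 0 := by
    intro γ
    rw [map_sum]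
    exact Finset.sum_eq_zero fun i hi => by rw [map_smul, hzero i hi, smul_zero]
  have hF : {x ∈ zono b | l x = c} = (fun t => v₀ + t) '' T := by
    ext x
    constructor
    · rintro ⟨⟨γ, hγ, rfl⟩, hlx⟩
      rw [hl] at hlx
      obtain ⟨h1, h2⟩ := hforce γ hγ (hlx.trans hcm)
      rw [hsplit γ h1 h2]
      exact ⟨_, ⟨γ, fun i _ => hγ i, rfl⟩, rfl⟩
    · rintro ⟨t, ⟨γ, hγ, rfl⟩, rfl⟩
      set γ' : Fin d → ℝ := fun i => if i ∈ J then (-(1/2) : ℝ) else if i ∈ Jz then γ i else 0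
        with hγ'
      have h1 : ∀ i ∈ J, γ' i = -(1/2) := fun i hi => by simp [hγ', hi]
      have h2 : ∀ i, i ∉ J → i ∉ Jz → γ' i = 0 := fun i hiJ hiz => by simp [hγ', hiJ, hiz]
      have hx : ∑ i, γ' i • b i = v₀ + ∑ i ∈ Jz, γ i • b i := by
        rw [hsplit γ' h1 h2]
        congr 1
        refine Finset.sum_congr rfl fun i hi => ?_
        have hiJ : i ∉ J := Finset.disjoint_right.1 hJJz hi
        simp [hγ', hiJ, hi]
      constructor
      · refine ⟨γ', fun i => ?_, hx.symm⟩
        by_cases hiJ : i ∈ J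
        · simp only [hγ', hiJ, if_pos]
          constructor <;> norm_num
        · by_cases hiz : i ∈ Jz
          · simpa [hγ', hiJ, hiz] using hγ i hiz
          · simp only [hγ', hiJ, hiz, if_neg, not_false_iff]
            constructor <;> norm_num
      · rw [map_add, hlv₀, hlT, add_zero, hcm]
  have hχρ : χ - ρ₀ = v₀ + ∑ i ∈ Jz, β i • b i := by
    have hv : v₀ = -((1/2 : ℝ) • ∑ i ∈ J, b i) := by
      rw [hv₀, ← neg_smul, Finset.smul_sum]
    rw [hχ, hv]
    abel
  constructor
  · rw [hF, hχρ]
    have hmem := subzono_mem_intrinsicInterior b Jz β hβ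
    have himg := AffineIsometry.image_intrinsicInterior
      ((AffineIsometryEquiv.constVAdd ℝ V v₀).toAffineIsometry) T
    have hφT : (⇑((AffineIsometryEquiv.constVAdd ℝ V v₀).toAffineIsometry)) '' T
        = (fun t => v₀ + t) '' T := by
      refine Set.image_congr' (fun x => ?_)
      simp [AffineIsometryEquiv.coe_toAffineIsometry, AffineIsometryEquiv.coe_constVAdd, vadd_eq_add]
    rw [← hφT, himg]
    exact ⟨_, hmem, by simp [AffineIsometryEquiv.coe_toAffineIsometry, AffineIsometryEquiv.coe_constVAdd, vadd_eq_add]⟩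
  · rw [hχρ, map_add, hlv₀, hlT, add_zero, hm]
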